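/- For μ, η ∈ F^{l₂+l₃}, the S(l₁,l₂,l₃;0,Γ)-modules A_μ and A_η are isomorphic if and only if μ − η ∈ Γ. -/

import Mathlib

open scoped BigOperators

namespace SDF

variable (F : Type) [Field F] [IsAlgClosed F] [CharZero F]
variable (l₁ l₂ l₃ : ℕ) (Γ : AddSubgroup (Fin (l₂ + l₃) → F))

/-- The semigroup algebra `A(l₁,l₂,l₃;Γ) = F[Γ × ℕ^{l₁+l₂}]`,
with basis `x^α t^i` for `α ∈ Γ`, `i ∈ ℕ^{l₁+l₂}`. -/
abbrev Alg : Type := AddMonoidAlgebra F (↥Γ × (Fin (l₁ + l₂) →₀ ℕ))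

/-- The basis monomial `x^α t^i`. -/
noncomputable def mono (α : Γ) (i : Fin (l₁ + l₂) →₀ ℕ) : Alg F l₁ l₂ l₃ Γ :=
  AddMonoidAlgebra.single (α, i) 1

/-- The `p`-th coordinate of `α ∈ Γ ⊆ F^{l₂+l₃}`, with the convention `α_p = 0` for `p ≤ l₁`. -/
def acoord (p : Fin (l₁ + l₂ + l₃)) (α : Γ) : F :=
  if h : l₁ ≤ (p : ℕ) then (α : Fin (l₂ + l₃) → F) ⟨(p : ℕ) - l₁, by have := p.isLt; omega⟩
  else 0

/-- The `p`-th coordinate of a general `μ ∈ F^{l₂+l₃}`, with the convention `μ_p = 0` for `p ≤ l₁`. -/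
def fcoord (p : Fin (l₁ + l₂ + l₃)) (μ : Fin (l₂ + l₃) → F) : F :=
  if h : l₁ ≤ (p : ℕ) then μ ⟨(p : ℕ) - l₁, by have := p.isLt; omega⟩ else 0

/-- The `p`-th component of `i ∈ ℕ^{l₁+l₂}`, with the convention `i_p = 0` for `p > l₁+l₂`. -/
def icoord (p : Fin (l₁ + l₂ + l₃)) (i : Fin (l₁ + l₂) →₀ ℕ) : ℕ :=
  if h : (p : ℕ) < l₁ + l₂ then i ⟨(p : ℕ), h⟩ else 0

/-- `i - 1_[p]` (truncated subtraction; only used with coefficient `i_p`). -/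
noncomputable def lower (p : Fin (l₁ + l₂ + l₃)) (i : Fin (l₁ + l₂) →₀ ℕ) : Fin (l₁ + l₂) →₀ ℕ :=
  if h : (p : ℕ) < l₁ + l₂ then i - Finsupp.single ⟨(p : ℕ), h⟩ 1 else i

/-- The derivation `∂_p` of `A(l₁,l₂,l₃;Γ)`:
`∂_p(x^α t^i) = α_p x^α t^i + i_p x^α t^{i - 1_[p]}`. -/
noncomputable def pd (p : Fin (l₁ + l₂ + l₃)) :
    Alg F l₁ l₂ l₃ Γ →ₗ[F] Alg F l₁ l₂ l₃ Γ :=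
  (Finsupp.lsum F fun g : ↥Γ × (Fin (l₁ + l₂) →₀ ℕ) =>
    LinearMap.toSpanSingleton F (Alg F l₁ l₂ l₃ Γ)
      (acoord F l₁ l₂ l₃ Γ p g.1 • mono F l₁ l₂ l₃ Γ g.1 g.2
        + (icoord l₁ l₂ l₃ p g.2 : F) • mono F l₁ l₂ l₃ Γ g.1 (lower l₁ l₂ l₃ p g.2)))
    ∘ₗ (AddMonoidAlgebra.coeffLinearEquiv F).toLinearMap

/-- The Witt algebra `W(l₁,l₂,l₃;Γ) = A·D`; the tuple `u : Wt` represents `Σ_p u_p ∂_p`. -/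
abbrev Wt : Type := Fin (l₁ + l₂ + l₃) → Alg F l₁ l₂ l₃ Γ

/-- The Lie bracket of `W(l₁,l₂,l₃;Γ)`:
`[Σ_p u_p ∂_p, Σ_q v_q ∂_q] = Σ_{p,q} (u_p ∂_p(v_q) - v_p ∂_p(u_q)) ∂_q`. -/
noncomputable def wbr (u v : Wt F l₁ l₂ l₃ Γ) : Wt F l₁ l₂ l₃ Γ :=
  fun r => ∑ p, (u p * pd F l₁ l₂ l₃ Γ p (v r) - v p * pd F l₁ l₂ l₃ Γ p (u r))

/-- `D_{p,q}(u) = ∂_p(u) ∂_q - ∂_q(u) ∂_p`. -/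
noncomputable def Dpq (p q : Fin (l₁ + l₂ + l₃)) (u : Alg F l₁ l₂ l₃ Γ) :
    Wt F l₁ l₂ l₃ Γ :=
  Pi.single q (pd F l₁ l₂ l₃ Γ p u) - Pi.single p (pd F l₁ l₂ l₃ Γ q u)

/-- The divergence-free algebra `S(l₁,l₂,l₃;0,Γ) = Span{D_{p,q}(u)}`. -/
noncomputable def Ssub : Submodule F (Wt F l₁ l₂ l₃ Γ) :=
  Submodule.span F {w | ∃ p q u, w = Dpq F l₁ l₂ l₃ Γ p q u}

/-- `Γ` is nondegenerate: it contains an `F`-basis of `F^{l₂+l₃}`, i.e. it spans. -/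
def Nondeg : Prop := Submodule.span F (Γ : Set (Fin (l₂ + l₃) → F)) = ⊤

/-- The divergence `div(Σ_p u_p ∂_p) = Σ_p ∂_p(u_p)`. -/
noncomputable def dvg (w : Wt F l₁ l₂ l₃ Γ) : Alg F l₁ l₂ l₃ Γ :=
  ∑ p, pd F l₁ l₂ l₃ Γ p (w p)

/-- The action of `Σ_p u_p ∂_p ∈ W` on `A_μ` (the space `A` with basis `v_{β,i}` the monomials):
`(u ∂_p) . v = u * (∂_p + μ_p) v`. On basis elements this gives exactly the defining formulas
of the module `A_μ`. -/
noncomputable def actW (μ : Fin (l₂ + l₃) → F) (X : Wt F l₁ l₂ l₃ Γ) :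
    Alg F l₁ l₂ l₃ Γ →ₗ[F] Alg F l₁ l₂ l₃ Γ :=
  ∑ p, (LinearMap.mulLeft F (X p)).comp
    (pd F l₁ l₂ l₃ Γ p + fcoord F l₁ l₂ l₃ p μ • LinearMap.id)

/-- The element `Σ_p a_p ∂_p` of `D ⊆ W`. -/
noncomputable def wD (a : Fin (l₁ + l₂ + l₃) → F) : Wt F l₁ l₂ l₃ Γ :=
  fun p => algebraMap F (Alg F l₁ l₂ l₃ Γ) (a p)

/-- The element `∂_p ∈ W`. -/
noncomputable def wdelta (p : Fin (l₁ + l₂ + l₃)) : Wt F l₁ l₂ l₃ Γ :=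
  Pi.single p 1

/-- `β(∂) = Σ_{p>l₁} a_p β_p` for `∂ = Σ_p a_p ∂_p`. -/
def beval (β : Fin (l₂ + l₃) → F) (a : Fin (l₁ + l₂ + l₃) → F) : F :=
  ∑ p, a p * fcoord F l₁ l₂ l₃ p β



set_option linter.unusedSectionVars false

-- AUX1

section Aux

variable {F l₁ l₂ l₃ Γ}

local notation "𝕄" => mono F l₁ l₂ l₃ Γ

lemma fcoord_add (p : Fin (l₁ + l₂ + l₃)) (x y : Fin (l₂ + l₃) → F) :
    fcoord F l₁ l₂ l₃ p (x + y) = fcoord F l₁ l₂ l₃ p x + fcoord F l₁ l₂ l₃ p y := by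
  unfold fcoord; split <;> simp

lemma fcoord_sub (p : Fin (l₁ + l₂ + l₃)) (x y : Fin (l₂ + l₃) → F) :
    fcoord F l₁ l₂ l₃ p (x - y) = fcoord F l₁ l₂ l₃ p x - fcoord F l₁ l₂ l₃ p y := by
  unfold fcoord; split <;> simp

lemma acoord_eq (p : Fin (l₁ + l₂ + l₃)) (α : Γ) :
    acoord F l₁ l₂ l₃ Γ p α = fcoord F l₁ l₂ l₃ p (α : Fin (l₂ + l₃) → F) := rfl

lemma acoord_add (p : Fin (l₁ + l₂ + l₃)) (α β : Γ) :
    acoord F l₁ l₂ l₃ Γ p (α + β) = acoord F l₁ l₂ l₃ Γ p α + acoord F l₁ l₂ l₃ Γ p β := by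
  simp [acoord_eq, ← fcoord_add]

lemma acoord_neg (p : Fin (l₁ + l₂ + l₃)) (α : Γ) :
    acoord F l₁ l₂ l₃ Γ p (-α) = - acoord F l₁ l₂ l₃ Γ p α := by
  unfold acoord; split <;> simp

lemma acoord_zero (p : Fin (l₁ + l₂ + l₃)) :
    acoord F l₁ l₂ l₃ Γ p (0 : Γ) = 0 := by
  unfold acoord; split <;> simp

lemma icoord_zero (p : Fin (l₁ + l₂ + l₃)) :
    icoord l₁ l₂ l₃ p (0 : Fin (l₁ + l₂) →₀ ℕ) = 0 := by
  unfold icoord; split <;> simp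

lemma lower_zero (p : Fin (l₁ + l₂ + l₃)) :
    lower l₁ l₂ l₃ p (0 : Fin (l₁ + l₂) →₀ ℕ) = 0 := by
  unfold lower; split
  · exact zero_tsub _
  · rfl

lemma mono_mul (α β : Γ) (i j : Fin (l₁ + l₂) →₀ ℕ) :
    𝕄 α i * 𝕄 β j = 𝕄 (α + β) (i + j) := by
  simp [mono, AddMonoidAlgebra.single_mul_single, Prod.mk_add_mk]

lemma mono_zero_eq_one : 𝕄 0 0 = 1 := by
  rfl

lemma pd_single (p : Fin (l₁ + l₂ + l₃)) (β : Γ) (i : Fin (l₁ + l₂) →₀ ℕ) (c : F) :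
    pd F l₁ l₂ l₃ Γ p (AddMonoidAlgebra.single (β, i) c)
      = c • (acoord F l₁ l₂ l₃ Γ p β • 𝕄 β i
          + (icoord l₁ l₂ l₃ p i : F) • 𝕄 β (lower l₁ l₂ l₃ p i)) := by
  rw [show pd F l₁ l₂ l₃ Γ p (AddMonoidAlgebra.single (β, i) c)
      = LinearMap.toSpanSingleton F (Alg F l₁ l₂ l₃ Γ)
          (acoord F l₁ l₂ l₃ Γ p β • 𝕄 β i
            + (icoord l₁ l₂ l₃ p i : F) • 𝕄 β (lower l₁ l₂ l₃ p i)) c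
    from Finsupp.lsum_single F _ _ _, LinearMap.toSpanSingleton_apply]

lemma pd_mono (p : Fin (l₁ + l₂ + l₃)) (β : Γ) (i : Fin (l₁ + l₂) →₀ ℕ) :
    pd F l₁ l₂ l₃ Γ p (𝕄 β i)
      = acoord F l₁ l₂ l₃ Γ p β • 𝕄 β i
        + (icoord l₁ l₂ l₃ p i : F) • 𝕄 β (lower l₁ l₂ l₃ p i) := by
  simpa [mono] using pd_single p β i 1

lemma pd_mono_zero (p : Fin (l₁ + l₂ + l₃)) (β : Γ) :
    pd F l₁ l₂ l₃ Γ p (𝕄 β 0) = acoord F l₁ l₂ l₃ Γ p β • 𝕄 β 0 := by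
  simp [pd_mono, icoord_zero]

end Aux

-- AUX2
section Aux2

variable {F : Type} [Field F] [IsAlgClosed F] [CharZero F]
variable {l₁ l₂ l₃ : ℕ} {Γ : AddSubgroup (Fin (l₂ + l₃) → F)}

local notation "𝕄" => mono F l₁ l₂ l₃ Γ

/-- total degree of a multi-index -/
def deg (i : Fin (l₁ + l₂) →₀ ℕ) : ℕ := i.sum fun _ m => m

lemma deg_add (a b : Fin (l₁ + l₂) →₀ ℕ) : deg (a + b) = deg a + deg b := by
  unfold deg
  exact Finsupp.sum_add_index' (fun _ => rfl) (fun _ _ _ => rfl)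

lemma deg_lower_lt (r : Fin (l₁ + l₂ + l₃)) (i : Fin (l₁ + l₂) →₀ ℕ)
    (h : icoord l₁ l₂ l₃ r i ≠ 0) :
    deg (lower l₁ l₂ l₃ r i) < deg i := by
  unfold icoord at h
  split at h
  · rename_i hr
    set k : Fin (l₁ + l₂) := ⟨(r : ℕ), hr⟩ with hk
    have hle : Finsupp.single k 1 ≤ i := by
      rw [Finsupp.single_le_iff]
      omega
    have hc : (i - Finsupp.single k 1) + Finsupp.single k 1 = i :=
      tsub_add_cancel_of_le hle
    have hdeg : deg (i - Finsupp.single k 1) + deg (Finsupp.single k 1) = deg i := by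
      rw [← deg_add, hc]
    have h1 : deg (Finsupp.single k 1) = 1 := by
      unfold deg
      rw [Finsupp.sum_single_index rfl]
    have hlow : lower l₁ l₂ l₃ r i = i - Finsupp.single k 1 := by
      unfold lower
      rw [dif_pos hr]
    rw [hlow]
    omega
  · exact absurd rfl h

/-- all of `x` is supported on `{β'} × {i : deg i < d}` -/
def Low (β' : Γ) (d : ℕ) (x : Alg F l₁ l₂ l₃ Γ) : Prop :=
  ∀ z : ↥Γ × (Fin (l₁ + l₂) →₀ ℕ), x.coeff z ≠ 0 → z.1 = β' ∧ deg z.2 < d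

lemma Low_zero (β' : Γ) (d : ℕ) : Low β' d (0 : Alg F l₁ l₂ l₃ Γ) := by
  intro z hz; simp at hz

lemma Low_add {β' : Γ} {d : ℕ} {x y : Alg F l₁ l₂ l₃ Γ}
    (hx : Low β' d x) (hy : Low β' d y) : Low β' d (x + y) := by
  intro z hz
  rcases ne_or_eq (x.coeff z) 0 with h | h
  · exact hx z h
  · apply hy z
    intro h'
    apply hz
    rw [AddMonoidAlgebra.coeff_add, Finsupp.add_apply, h, h', add_zero]

lemma Low_smul {β' : Γ} {d : ℕ} {x : Alg F l₁ l₂ l₃ Γ} (c : F)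
    (hx : Low β' d x) : Low β' d (c • x) := by
  intro z hz
  apply hx z
  intro h'
  apply hz
  rw [AddMonoidAlgebra.coeff_smul, Finsupp.smul_apply, h', smul_zero]

lemma Low_neg {β' : Γ} {d : ℕ} {x : Alg F l₁ l₂ l₃ Γ}
    (hx : Low β' d x) : Low β' d (-x) := by
  intro z hz
  apply hx z
  intro h'
  apply hz
  rw [AddMonoidAlgebra.coeff_neg, Finsupp.neg_apply, h', neg_zero]

lemma Low_sub {β' : Γ} {d : ℕ} {x y : Alg F l₁ l₂ l₃ Γ}
    (hx : Low β' d x) (hy : Low β' d y) : Low β' d (x - y) := by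
  rw [sub_eq_add_neg]; exact Low_add hx (Low_neg hy)

lemma Low_mono {β' : Γ} {d : ℕ} {i : Fin (l₁ + l₂) →₀ ℕ} (c : F)
    (hi : deg i < d) : Low β' d (c • 𝕄 β' i) := by
  intro z hz
  rw [AddMonoidAlgebra.coeff_smul, Finsupp.smul_apply] at hz
  have : (𝕄 β' i).coeff z ≠ 0 := by
    intro h'; apply hz; rw [h', smul_zero]
  rw [mono, AddMonoidAlgebra.coeff_single] at this
  have hmem := Finsupp.mem_support_iff.mpr this
  rw [Finsupp.support_single_ne_zero _ (one_ne_zero)] at hmem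
  simp only [Finset.mem_singleton] at hmem
  subst hmem
  exact ⟨rfl, hi⟩

lemma Low_sum {β' : Γ} {d : ℕ} {s : Finset (↥Γ × (Fin (l₁ + l₂) →₀ ℕ))}
    {f : ↥Γ × (Fin (l₁ + l₂) →₀ ℕ) → Alg F l₁ l₂ l₃ Γ}
    (hf : ∀ z ∈ s, Low β' d (f z)) : Low β' d (∑ z ∈ s, f z) := by
  classical
  induction s using Finset.induction_on with
  | empty => simpa using Low_zero β' d
  | @insert a s' hnotmem ih =>
    rw [Finset.sum_insert hnotmem]
    exact Low_add (hf a (Finset.mem_insert_self a s'))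
      (ih fun z hz => hf z (Finset.mem_insert_of_mem hz))

/-- error term built from a lowering operator -/
lemma Low_err {β' : Γ} {d : ℕ} (c : F) (r : Fin (l₁ + l₂ + l₃))
    (i : Fin (l₁ + l₂) →₀ ℕ) (hd : deg i ≤ d) :
    Low β' d ((c * (icoord l₁ l₂ l₃ r i : F)) • 𝕄 β' (lower l₁ l₂ l₃ r i)) := by
  by_cases h : icoord l₁ l₂ l₃ r i = 0
  · rw [h]; simpa using Low_zero β' d
  · exact Low_mono _ (lt_of_lt_of_le (deg_lower_lt r i h) hd)

end Aux2

-- AUX3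
section Aux3

variable {F : Type} [Field F] [IsAlgClosed F] [CharZero F]
variable {l₁ l₂ l₃ : ℕ} {Γ : AddSubgroup (Fin (l₂ + l₃) → F)}

local notation "𝕄" => mono F l₁ l₂ l₃ Γ

/-- The action of `D_{p,q}(x^γ)` on `A_θ`. -/
noncomputable def Eop (θ : Fin (l₂ + l₃) → F) (γ : Γ) (p q : Fin (l₁ + l₂ + l₃)) :
    Alg F l₁ l₂ l₃ Γ →ₗ[F] Alg F l₁ l₂ l₃ Γ :=
  actW F l₁ l₂ l₃ Γ θ (Dpq F l₁ l₂ l₃ Γ p q (𝕄 γ 0))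

lemma Eop_apply (θ : Fin (l₂ + l₃) → F) (γ : Γ) (p q : Fin (l₁ + l₂ + l₃))
    (v : Alg F l₁ l₂ l₃ Γ) :
    Eop θ γ p q v
      = (acoord F l₁ l₂ l₃ Γ p γ • 𝕄 γ 0)
          * (pd F l₁ l₂ l₃ Γ q v + fcoord F l₁ l₂ l₃ q θ • v)
        - (acoord F l₁ l₂ l₃ Γ q γ • 𝕄 γ 0)
          * (pd F l₁ l₂ l₃ Γ p v + fcoord F l₁ l₂ l₃ p θ • v) := by
  unfold Eop actW Dpq
  rw [pd_mono_zero, pd_mono_zero]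
  simp only [LinearMap.sum_apply, LinearMap.comp_apply, LinearMap.add_apply,
    LinearMap.smul_apply, LinearMap.id_apply, LinearMap.mulLeft_apply,
    Pi.sub_apply, Pi.single_apply, sub_mul, ite_mul, zero_mul]
  rw [Finset.sum_sub_distrib]
  rw [Finset.sum_ite_eq' Finset.univ q, Finset.sum_ite_eq' Finset.univ p]
  simp

/-- the "diagonal" coefficient of `Eop` -/
def Wc (θ : Fin (l₂ + l₃) → F) (γ β : Γ) (p q : Fin (l₁ + l₂ + l₃)) : F :=
  acoord F l₁ l₂ l₃ Γ p γ * (acoord F l₁ l₂ l₃ Γ q β + fcoord F l₁ l₂ l₃ q θ)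
    - acoord F l₁ l₂ l₃ Γ q γ * (acoord F l₁ l₂ l₃ Γ p β + fcoord F l₁ l₂ l₃ p θ)

lemma Eop_mono (θ : Fin (l₂ + l₃) → F) (γ : Γ) (p q : Fin (l₁ + l₂ + l₃))
    (β : Γ) (i : Fin (l₁ + l₂) →₀ ℕ) :
    Eop θ γ p q (𝕄 β i)
      = Wc θ γ β p q • 𝕄 (γ + β) i
        + (acoord F l₁ l₂ l₃ Γ p γ * (icoord l₁ l₂ l₃ q i : F))
            • 𝕄 (γ + β) (lower l₁ l₂ l₃ q i)
        - (acoord F l₁ l₂ l₃ Γ q γ * (icoord l₁ l₂ l₃ p i : F))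
            • 𝕄 (γ + β) (lower l₁ l₂ l₃ p i) := by
  rw [Eop_apply, pd_mono, pd_mono]
  simp only [smul_mul_assoc, mul_add, mul_smul_comm, mono_mul, zero_add, smul_smul, Wc]
  module

lemma Eop_mono_zero (θ : Fin (l₂ + l₃) → F) (γ : Γ) (p q : Fin (l₁ + l₂ + l₃)) (β : Γ) :
    Eop θ γ p q (𝕄 β 0) = Wc θ γ β p q • 𝕄 (γ + β) 0 := by
  rw [Eop_mono]
  simp [icoord_zero]

lemma Eop_mono_split (θ : Fin (l₂ + l₃) → F) (γ : Γ) (p q : Fin (l₁ + l₂ + l₃))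
    (β : Γ) (i : Fin (l₁ + l₂) →₀ ℕ) :
    ∃ err, Eop θ γ p q (𝕄 β i) = Wc θ γ β p q • 𝕄 (γ + β) i + err
      ∧ Low (γ + β) (deg i) err := by
  refine ⟨(acoord F l₁ l₂ l₃ Γ p γ * (icoord l₁ l₂ l₃ q i : F))
            • 𝕄 (γ + β) (lower l₁ l₂ l₃ q i)
        - (acoord F l₁ l₂ l₃ Γ q γ * (icoord l₁ l₂ l₃ p i : F))
            • 𝕄 (γ + β) (lower l₁ l₂ l₃ p i), ?_,
    Low_sub (Low_err _ q i le_rfl) (Low_err _ p i le_rfl)⟩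
  rw [Eop_mono θ γ p q β i, add_sub_assoc]

lemma Eop_low {θ : Fin (l₂ + l₃) → F} {γ : Γ} {p q : Fin (l₁ + l₂ + l₃)}
    {β' : Γ} {d : ℕ} {x : Alg F l₁ l₂ l₃ Γ} (hx : Low β' d x) :
    Low (γ + β') d (Eop θ γ p q x) := by
  classical
  have hxrep : x = ∑ z ∈ x.coeff.support, AddMonoidAlgebra.single z (x.coeff z) := by
    exact (AddMonoidAlgebra.sum_coeff_single x).symm
  rw [hxrep, map_sum]
  apply Low_sum
  intro z hz
  have hzx : x.coeff z ≠ 0 := Finsupp.mem_support_iff.mp hz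
  obtain ⟨h1, h2⟩ := hx z hzx
  have hsingle : (AddMonoidAlgebra.single z (x.coeff z) : Alg F l₁ l₂ l₃ Γ) = (x.coeff z) • 𝕄 z.1 z.2 := by
    rw [mono]
    rw [AddMonoidAlgebra.smul_single, smul_eq_mul, mul_one]
  rw [hsingle, map_smul]
  apply Low_smul
  obtain ⟨err, heq, herr⟩ := Eop_mono_split θ γ p q z.1 z.2
  rw [heq]
  apply Low_add
  · rw [h1]; exact Low_mono _ (lt_of_le_of_lt le_rfl h2)
  · rw [h1] at herr
    exact fun w hw => ⟨(herr w hw).1, lt_trans (herr w hw).2 h2⟩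

end Aux3

-- AUX4
section Aux4

variable {F : Type} [Field F] [IsAlgClosed F] [CharZero F]
variable {l₁ l₂ l₃ : ℕ} {Γ : AddSubgroup (Fin (l₂ + l₃) → F)}

local notation "𝕄" => mono F l₁ l₂ l₃ Γ

/-- `T` is `γ`-shifted degree-triangular with diagonal coefficients `c`. -/
def Diag (γ : Γ) (c : Γ → F) (T : Alg F l₁ l₂ l₃ Γ →ₗ[F] Alg F l₁ l₂ l₃ Γ) : Prop :=
  (∀ β i, ∃ err, T (𝕄 β i) = c β • 𝕄 (γ + β) i + err ∧ Low (γ + β) (deg i) err)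
  ∧ (∀ (β' : Γ) (d : ℕ) (x : Alg F l₁ l₂ l₃ Γ), Low β' d x → Low (γ + β') d (T x))

lemma Diag_Eop (θ : Fin (l₂ + l₃) → F) (γ : Γ) (p q : Fin (l₁ + l₂ + l₃)) :
    Diag γ (fun β => Wc θ γ β p q) (Eop θ γ p q) :=
  ⟨fun β i => Eop_mono_split θ γ p q β i, fun _ _ _ hx => Eop_low hx⟩

lemma Diag_comp {γ γ' : Γ} {c c' : Γ → F}
    {T T' : Alg F l₁ l₂ l₃ Γ →ₗ[F] Alg F l₁ l₂ l₃ Γ}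
    (hT : Diag γ c T) (hT' : Diag γ' c' T') :
    Diag (γ' + γ) (fun β => c' (γ + β) * c β) (T'.comp T) := by
  obtain ⟨hT1, hT2⟩ := hT
  obtain ⟨hT1', hT2'⟩ := hT'
  constructor
  · intro β i
    obtain ⟨err, heq, herr⟩ := hT1 β i
    obtain ⟨err', heq', herr'⟩ := hT1' (γ + β) i
    refine ⟨c β • err' + T' err, ?_, ?_⟩
    · rw [LinearMap.comp_apply, heq, map_add, map_smul, heq', smul_add, smul_smul,
        mul_comm (c β), add_assoc γ' γ β, add_assoc]
    · rw [add_assoc γ' γ β]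
      exact Low_add (Low_smul _ herr') (hT2' _ _ _ herr)
  · intro β' d x hx
    have := hT2' (γ + β') d (T x) (hT2 β' d x hx)
    rw [LinearMap.comp_apply]
    rwa [add_assoc]

end Aux4

-- AUX5
section Aux5

variable {F : Type} [Field F] [IsAlgClosed F] [CharZero F]
variable {l₁ l₂ l₃ : ℕ} {Γ : AddSubgroup (Fin (l₂ + l₃) → F)}

local notation "𝕄" => mono F l₁ l₂ l₃ Γ

lemma exists_max_support {w : Alg F l₁ l₂ l₃ Γ} (hw : w ≠ 0) :
    ∃ z₀ : ↥Γ × (Fin (l₁ + l₂) →₀ ℕ), w.coeff z₀ ≠ 0 ∧ ∀ z, w.coeff z ≠ 0 → deg z.2 ≤ deg z₀.2 := by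
  classical
  have hne : w.coeff.support.Nonempty := Finsupp.support_nonempty_iff.mpr
    (fun h => hw (AddMonoidAlgebra.coeff_injective (by simpa using h)))
  obtain ⟨z₀, hz₀, hmax⟩ := w.coeff.support.exists_max_image (fun z => deg z.2) hne
  exact ⟨z₀, Finsupp.mem_support_iff.mp hz₀,
    fun z hz => hmax z (Finsupp.mem_support_iff.mpr hz)⟩

lemma eigen_val {T : Alg F l₁ l₂ l₃ Γ →ₗ[F] Alg F l₁ l₂ l₃ Γ} {g : Γ → F}
    {w : Alg F l₁ l₂ l₃ Γ} {z₀ : ↥Γ × (Fin (l₁ + l₂) →₀ ℕ)} {f : F}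
    (hz : w.coeff z₀ ≠ 0) (hmax : ∀ z, w.coeff z ≠ 0 → deg z.2 ≤ deg z₀.2)
    (hT : ∀ β i, ∃ err, T (𝕄 β i) = g β • 𝕄 β i + err ∧ Low β (deg i) err)
    (heq : T w = f • w) : f = g z₀.1 := by
  classical
  have hrep : w = ∑ z ∈ w.coeff.support, (w.coeff z) • 𝕄 z.1 z.2 := by
    conv_lhs => rw [← AddMonoidAlgebra.sum_coeff_single w]
    rw [Finsupp.sum]
    apply Finset.sum_congr rfl
    intro z _
    rw [mono, AddMonoidAlgebra.smul_single, smul_eq_mul, mul_one]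
  have hTw : (T w).coeff z₀ = g z₀.1 * w.coeff z₀ := by
    conv_lhs => rw [hrep, map_sum]
    rw [AddMonoidAlgebra.coeff_sum, Finsupp.finset_sum_apply]
    have hterm : ∀ z ∈ w.coeff.support,
        ((T ((w.coeff z) • 𝕄 z.1 z.2)) : Alg F l₁ l₂ l₃ Γ).coeff z₀
          = if z = z₀ then g z₀.1 * w.coeff z₀ else 0 := by
      intro z hzs
      obtain ⟨err, heqz, herr⟩ := hT z.1 z.2
      have herr0 : err.coeff z₀ = 0 := by
        by_contra hne0
        obtain ⟨h1, h2⟩ := herr z₀ hne0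
        have := hmax z (Finsupp.mem_support_iff.mp hzs)
        omega
      rw [map_smul, heqz]
      rw [AddMonoidAlgebra.coeff_smul, Finsupp.smul_apply, AddMonoidAlgebra.coeff_add, Finsupp.add_apply,
        AddMonoidAlgebra.coeff_smul, Finsupp.smul_apply, herr0, add_zero]
      have hm : (𝕄 z.1 z.2).coeff z₀ = if z = z₀ then 1 else 0 := by
        rw [mono, AddMonoidAlgebra.coeff_single]
        rw [Finsupp.single_apply]
      rw [hm]
      by_cases hzz : z = z₀
      · subst hzz
        simp [smul_eq_mul]
        ring
      · simp [hzz]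
    rw [Finset.sum_congr rfl hterm, Finset.sum_ite_eq' w.coeff.support z₀]
    rw [if_pos (Finsupp.mem_support_iff.mpr hz)]
  rw [heq, AddMonoidAlgebra.coeff_smul, Finsupp.smul_apply, smul_eq_mul] at hTw
  exact mul_right_cancel₀ hz hTw

end Aux5

-- AUX6 : backward direction
section Aux6

variable {F : Type} [Field F] [IsAlgClosed F] [CharZero F]
variable {l₁ l₂ l₃ : ℕ} {Γ : AddSubgroup (Fin (l₂ + l₃) → F)}

local notation "𝕄" => mono F l₁ l₂ l₃ Γ

lemma pd_mul (p : Fin (l₁ + l₂ + l₃)) (γ : Γ) (v : Alg F l₁ l₂ l₃ Γ) :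
    pd F l₁ l₂ l₃ Γ p (𝕄 γ 0 * v)
      = acoord F l₁ l₂ l₃ Γ p γ • (𝕄 γ 0 * v) + 𝕄 γ 0 * pd F l₁ l₂ l₃ Γ p v := by
  induction v using AddMonoidAlgebra.induction_linear with
  | zero => simp
  | add f g hf hg =>
    rw [mul_add, map_add, hf, map_add, mul_add, hg, smul_add]
    abel
  | single z c =>
    have hsingle : (AddMonoidAlgebra.single z c : Alg F l₁ l₂ l₃ Γ) = c • 𝕄 z.1 z.2 := by
      rw [mono, AddMonoidAlgebra.smul_single, smul_eq_mul, mul_one]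
    rw [hsingle, mul_smul_comm, map_smul, map_smul, mul_smul_comm]
    rw [mono_mul, zero_add, pd_mono, pd_mono, acoord_add]
    rw [mul_add, mul_smul_comm, mul_smul_comm, mono_mul, mono_mul, zero_add, zero_add]
    rw [smul_add]
    module

lemma actW_twist {μ η : Fin (l₂ + l₃) → F} {γ : Γ}
    (hγ : ∀ r, fcoord F l₁ l₂ l₃ r μ
        = acoord F l₁ l₂ l₃ Γ r γ + fcoord F l₁ l₂ l₃ r η)
    (X : Wt F l₁ l₂ l₃ Γ) (v : Alg F l₁ l₂ l₃ Γ) :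
    𝕄 γ 0 * actW F l₁ l₂ l₃ Γ μ X v = actW F l₁ l₂ l₃ Γ η X (𝕄 γ 0 * v) := by
  unfold actW
  simp only [LinearMap.sum_apply, LinearMap.comp_apply, LinearMap.add_apply,
    LinearMap.smul_apply, LinearMap.id_apply, LinearMap.mulLeft_apply]
  rw [Finset.mul_sum]
  apply Finset.sum_congr rfl
  intro r _
  rw [pd_mul, hγ r]
  simp only [Algebra.smul_def, map_add]
  ring

lemma backward_dir (μ η : Fin (l₂ + l₃) → F) (h : μ - η ∈ Γ) :
    ∃ e : Alg F l₁ l₂ l₃ Γ ≃ₗ[F] Alg F l₁ l₂ l₃ Γ,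
        ∀ X ∈ Ssub F l₁ l₂ l₃ Γ, ∀ v : Alg F l₁ l₂ l₃ Γ,
          e (actW F l₁ l₂ l₃ Γ μ X v) = actW F l₁ l₂ l₃ Γ η X (e v) := by
  set γ : Γ := ⟨μ - η, h⟩ with hγdef
  have hmul1 : ∀ x : Alg F l₁ l₂ l₃ Γ, 𝕄 γ 0 * (𝕄 (-γ) 0 * x) = x := by
    intro x
    rw [← mul_assoc, mono_mul, add_neg_cancel, add_zero, mono_zero_eq_one, one_mul]
  have hmul2 : ∀ x : Alg F l₁ l₂ l₃ Γ, 𝕄 (-γ) 0 * (𝕄 γ 0 * x) = x := by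
    intro x
    rw [← mul_assoc, mono_mul, neg_add_cancel, add_zero, mono_zero_eq_one, one_mul]
  refine ⟨LinearEquiv.ofLinear (LinearMap.mulLeft F (𝕄 γ 0))
      (LinearMap.mulLeft F (𝕄 (-γ) 0))
      (LinearMap.ext fun x => hmul1 x) (LinearMap.ext fun x => hmul2 x), ?_⟩
  intro X _ v
  simp only [LinearEquiv.ofLinear_apply, LinearMap.mulLeft_apply]
  apply actW_twist
  intro r
  have : (γ : Fin (l₂ + l₃) → F) = μ - η := rfl
  rw [acoord_eq, this, fcoord_sub]
  ring

end Aux6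

-- AUX7
section Aux7

variable {F : Type} [Field F] [IsAlgClosed F] [CharZero F]
variable {l₁ l₂ l₃ : ℕ} {Γ : AddSubgroup (Fin (l₂ + l₃) → F)}

local notation "𝕄" => mono F l₁ l₂ l₃ Γ

lemma fcoord_smul (p : Fin (l₁ + l₂ + l₃)) (c : F) (x : Fin (l₂ + l₃) → F) :
    fcoord F l₁ l₂ l₃ p (c • x) = c * fcoord F l₁ l₂ l₃ p x := by
  unfold fcoord; split <;> simp

/-- `fcoord` as a linear map -/
noncomputable def fcoordL (p : Fin (l₁ + l₂ + l₃)) : (Fin (l₂ + l₃) → F) →ₗ[F] F where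
  toFun := fcoord F l₁ l₂ l₃ p
  map_add' := fcoord_add p
  map_smul' := fun c x => fcoord_smul p c x

lemma fcoord_at (x : Fin (l₂ + l₃) → F) (k : Fin (l₂ + l₃)) :
    fcoord F l₁ l₂ l₃ ⟨l₁ + (k : ℕ), by have := k.isLt; omega⟩ x = x k := by
  unfold fcoord
  rw [dif_pos (by simp : l₁ ≤ l₁ + (k : ℕ))]
  have : (⟨l₁ + (k : ℕ) - l₁, by have := k.isLt; omega⟩ : Fin (l₂ + l₃)) = k := by
    apply Fin.ext
    simp
  rw [this]

lemma Dpq_mem (p q : Fin (l₁ + l₂ + l₃)) (u : Alg F l₁ l₂ l₃ Γ) :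
    Dpq F l₁ l₂ l₃ Γ p q u ∈ Ssub F l₁ l₂ l₃ Γ :=
  Submodule.subset_span ⟨p, q, u, rfl⟩

lemma Diag_of_zero {γ : Γ} {c : Γ → F}
    {T : Alg F l₁ l₂ l₃ Γ →ₗ[F] Alg F l₁ l₂ l₃ Γ}
    (h : Diag γ c T) (h0 : γ = 0) :
    ∀ β i, ∃ err, T (𝕄 β i) = c β • 𝕄 β i + err ∧ Low β (deg i) err := by
  subst h0
  intro β i
  obtain ⟨err, h1, h2⟩ := h.1 β i
  rw [zero_add] at h1 h2
  exact ⟨err, h1, h2⟩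

lemma sq_cube_eq {s t : F} (h2 : s ^ 2 = t ^ 2) (h3 : s ^ 3 = t ^ 3) : s = t := by
  by_cases hs : s = 0
  · subst hs
    have ht : t ^ 2 = 0 := by rw [← h2]; ring
    have : t = 0 := pow_eq_zero_iff (two_ne_zero) |>.mp ht
    rw [this]
  · have hkey : (s - t) * s ^ 2 = 0 := by
      have : s * s ^ 2 = t * t ^ 2 := by
        rw [← pow_succ']
        rw [show t * t ^ 2 = t ^ 3 by ring]
        exact h3
      rw [h2] at this ⊢
      ring_nf
      ring_nf at this
      linear_combination this
    have hs2 : s ^ 2 ≠ 0 := pow_ne_zero 2 hs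
    rcases mul_eq_zero.mp hkey with h | h
    · exact sub_eq_zero.mp h
    · exact absurd h hs2

end Aux7

-- AUX8 : forward direction
section Aux8

variable {F : Type} [Field F] [IsAlgClosed F] [CharZero F]
variable {l₁ l₂ l₃ : ℕ} {Γ : AddSubgroup (Fin (l₂ + l₃) → F)}

local notation "𝕄" => mono F l₁ l₂ l₃ Γ

set_option maxHeartbeats 1000000 in
lemma forward_key (μ η : Fin (l₂ + l₃) → F)
    (e : Alg F l₁ l₂ l₃ Γ ≃ₗ[F] Alg F l₁ l₂ l₃ Γ)
    (he : ∀ X ∈ Ssub F l₁ l₂ l₃ Γ, ∀ v : Alg F l₁ l₂ l₃ Γ,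
      e (actW F l₁ l₂ l₃ Γ μ X v) = actW F l₁ l₂ l₃ Γ η X (e v)) :
    ∃ β₀ : Γ, ∀ (α : Γ) (p q : Fin (l₁ + l₂ + l₃)),
      acoord F l₁ l₂ l₃ Γ p α
          * fcoord F l₁ l₂ l₃ q (μ - η - (β₀ : Fin (l₂ + l₃) → F))
        = acoord F l₁ l₂ l₃ Γ q α
          * fcoord F l₁ l₂ l₃ p (μ - η - (β₀ : Fin (l₂ + l₃) → F)) := by
  classical
  have hinter : ∀ (γ : Γ) (p q : Fin (l₁ + l₂ + l₃)) (v : Alg F l₁ l₂ l₃ Γ),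
      e (Eop μ γ p q v) = Eop η γ p q (e v) :=
    fun γ p q v => he _ (Dpq_mem p q _) v
  have hw : (e 1 : Alg F l₁ l₂ l₃ Γ) ≠ 0 := by
    intro h0
    have h1 : e 1 = e 0 := by rw [h0, map_zero]
    exact one_ne_zero (e.injective h1)
  obtain ⟨z₀, hz₀, hmax⟩ := exists_max_support hw
  refine ⟨z₀.1, ?_⟩
  intro α p q
  have hcomp2 : ∀ θ : Fin (l₂ + l₃) → F,
      Eop θ α p q (Eop θ (-α) p q (𝕄 0 0))
        = (Wc θ (-α) 0 p q * Wc θ α (-α + 0) p q) • 𝕄 0 0 := by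
    intro θ
    rw [Eop_mono_zero, map_smul, Eop_mono_zero, smul_smul,
      show α + (-α + 0) = (0 : Γ) by abel]
  have h2w : ((Eop η α p q).comp (Eop η (-α) p q)) (e 1)
      = (Wc μ (-α) 0 p q * Wc μ α (-α + 0) p q) • (e 1) := by
    rw [LinearMap.comp_apply, ← hinter, ← hinter,
      show (1 : Alg F l₁ l₂ l₃ Γ) = 𝕄 0 0 from mono_zero_eq_one.symm,
      hcomp2 μ, map_smul, mono_zero_eq_one]
  have geq2 := eigen_val hz₀ hmax
    (Diag_of_zero (Diag_comp (Diag_Eop η (-α) p q) (Diag_Eop η α p q))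
      (add_neg_cancel α)) h2w
  have hcomp3 : ∀ θ : Fin (l₂ + l₃) → F,
      Eop θ α p q (Eop θ α p q (Eop θ (-(α + α)) p q (𝕄 0 0)))
        = (Wc θ (-(α + α)) 0 p q * Wc θ α (-(α + α) + 0) p q
            * Wc θ α (α + (-(α + α) + 0)) p q) • 𝕄 0 0 := by
    intro θ
    simp only [Eop_mono_zero, map_smul, smul_smul]
    rw [show α + (α + (-(α + α) + 0)) = (0 : Γ) by abel]
    try congr 1
    try ring
  have h3w : ((Eop η α p q).comp ((Eop η α p q).comp (Eop η (-(α + α)) p q))) (e 1)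
      = (Wc μ (-(α + α)) 0 p q * Wc μ α (-(α + α) + 0) p q
          * Wc μ α (α + (-(α + α) + 0)) p q) • (e 1) := by
    rw [LinearMap.comp_apply, LinearMap.comp_apply, ← hinter, ← hinter, ← hinter,
      show (1 : Alg F l₁ l₂ l₃ Γ) = 𝕄 0 0 from mono_zero_eq_one.symm,
      hcomp3 μ, map_smul, mono_zero_eq_one]
  have geq3 := eigen_val hz₀ hmax
    (Diag_of_zero (Diag_comp (Diag_comp (Diag_Eop η (-(α + α)) p q)
        (Diag_Eop η α p q)) (Diag_Eop η α p q))
      (show α + (α + -(α + α)) = (0 : Γ) by abel)) h3w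
  have hst : acoord F l₁ l₂ l₃ Γ p α * fcoord F l₁ l₂ l₃ q μ
        - acoord F l₁ l₂ l₃ Γ q α * fcoord F l₁ l₂ l₃ p μ
      = acoord F l₁ l₂ l₃ Γ p α
            * (acoord F l₁ l₂ l₃ Γ q z₀.1 + fcoord F l₁ l₂ l₃ q η)
        - acoord F l₁ l₂ l₃ Γ q α
            * (acoord F l₁ l₂ l₃ Γ p z₀.1 + fcoord F l₁ l₂ l₃ p η) := by
    apply sq_cube_eq
    · simp only [Wc, acoord_add, acoord_neg, acoord_zero] at geq2
      linear_combination -geq2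
    · simp only [Wc, acoord_add, acoord_neg, acoord_zero] at geq3
      linear_combination (-1/2 : F) * geq3
  rw [fcoord_sub, fcoord_sub, fcoord_sub, fcoord_sub, ← acoord_eq, ← acoord_eq]
  linear_combination hst

end Aux8

-- AUX9 : nondegeneracy argument and main theorem assembly
section Aux9

variable {F : Type} [Field F] [IsAlgClosed F] [CharZero F]
variable {l₁ l₂ l₃ : ℕ} {Γ : AddSubgroup (Fin (l₂ + l₃) → F)}

lemma rho_zero (h23 : 3 ≤ l₂ + l₃) (hΓ : Nondeg F l₂ l₃ Γ)
    (ρ : Fin (l₂ + l₃) → F)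
    (key : ∀ (α : Γ) (p q : Fin (l₁ + l₂ + l₃)),
      acoord F l₁ l₂ l₃ Γ p α * fcoord F l₁ l₂ l₃ q ρ
        = acoord F l₁ l₂ l₃ Γ q α * fcoord F l₁ l₂ l₃ p ρ) :
    ρ = 0 := by
  classical
  funext k
  have hk2 : 1 < l₂ + l₃ := by omega
  set k' : Fin (l₂ + l₃) :=
    if hk : (k : ℕ) = 0 then ⟨1, by omega⟩ else ⟨0, by omega⟩ with hk'def
  have hkk' : k' ≠ k := by
    rw [hk'def]
    split
    · rename_i h0
      exact fun hc => by simp [Fin.ext_iff, h0] at hc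
    · rename_i h0
      exact fun hc => h0 (by simpa [Fin.ext_iff] using hc.symm)
  have hkp : l₁ + (k : ℕ) < l₁ + l₂ + l₃ := by have := k.isLt; omega
  have hkq : l₁ + (k' : ℕ) < l₁ + l₂ + l₃ := by have := k'.isLt; omega
  set p : Fin (l₁ + l₂ + l₃) := ⟨l₁ + (k : ℕ), hkp⟩ with hpdef
  set q : Fin (l₁ + l₂ + l₃) := ⟨l₁ + (k' : ℕ), hkq⟩ with hqdef
  set φ : (Fin (l₂ + l₃) → F) →ₗ[F] F :=
    fcoord F l₁ l₂ l₃ q ρ • fcoordL p - fcoord F l₁ l₂ l₃ p ρ • fcoordL q with hφdef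
  have hφapp : ∀ v : Fin (l₂ + l₃) → F,
      φ v = fcoord F l₁ l₂ l₃ q ρ * fcoord F l₁ l₂ l₃ p v
        - fcoord F l₁ l₂ l₃ p ρ * fcoord F l₁ l₂ l₃ q v := fun v => rfl
  have hker : (Γ : Set (Fin (l₂ + l₃) → F)) ⊆ (LinearMap.ker φ : Set _) := by
    intro v hv
    have hk1 : fcoord F l₁ l₂ l₃ p v * fcoord F l₁ l₂ l₃ q ρ
        = fcoord F l₁ l₂ l₃ q v * fcoord F l₁ l₂ l₃ p ρ := key ⟨v, hv⟩ p q
    rw [SetLike.mem_coe, LinearMap.mem_ker, hφapp v]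
    linear_combination hk1
  have htop : (⊤ : Submodule F (Fin (l₂ + l₃) → F)) ≤ LinearMap.ker φ := by
    rw [← hΓ]
    exact Submodule.span_le.mpr hker
  have hφv : φ (Pi.single k' 1) = 0 := htop Submodule.mem_top
  rw [hφapp] at hφv
  have h1 : fcoord F l₁ l₂ l₃ p (Pi.single k' (1 : F)) = 0 := by
    rw [hpdef, fcoord_at]
    exact Pi.single_eq_of_ne (Ne.symm hkk') 1
  have h2 : fcoord F l₁ l₂ l₃ q (Pi.single k' (1 : F)) = 1 := by
    rw [hqdef, fcoord_at]
    exact Pi.single_eq_same k' 1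
  have h3 : fcoord F l₁ l₂ l₃ p ρ = ρ k := by rw [hpdef, fcoord_at]
  rw [h1, h2] at hφv
  have h4 : fcoord F l₁ l₂ l₃ p ρ = 0 := by linear_combination -hφv
  rw [h3] at h4
  simpa using h4

end Aux9

/-- Proposition 2.1(3): the `S(l₁,l₂,l₃;0,Γ)`-modules `A_μ` and `A_η` are isomorphic
if and only if `μ − η ∈ Γ`. -/
theorem stmt11 [IsAlgClosed F] [CharZero F]
    (h12 : 3 ≤ l₁ + l₂) (h23 : 3 ≤ l₂ + l₃) (hΓ : Nondeg F l₂ l₃ Γ)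
    (μ η : Fin (l₂ + l₃) → F) :
    (∃ e : Alg F l₁ l₂ l₃ Γ ≃ₗ[F] Alg F l₁ l₂ l₃ Γ,
        ∀ X ∈ Ssub F l₁ l₂ l₃ Γ, ∀ v : Alg F l₁ l₂ l₃ Γ,
          e (actW F l₁ l₂ l₃ Γ μ X v) = actW F l₁ l₂ l₃ Γ η X (e v)) ↔
      μ - η ∈ Γ := by
  constructor
  · rintro ⟨e, he⟩
    obtain ⟨β₀, key⟩ := forward_key μ η e he
    have hρ := rho_zero (l₁ := l₁) h23 hΓ (μ - η - (β₀ : Fin (l₂ + l₃) → F)) key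
    have hβ : μ - η = (β₀ : Fin (l₂ + l₃) → F) := sub_eq_zero.mp hρ
    rw [hβ]
    exact SetLike.coe_mem β₀
  · exact backward_dir μ η

end SDF
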